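/- Let λ ≥ 0 be a real number, k ≥ 1 an integer, and ε ∈ {i, −i}. Then the polynomial p(z) = (−z² + z + λ)^k − ε ∈ ℂ[z] has degree 2k and exactly 2k distinct complex roots (i.e. p is squarefree, having no repeated roots). -/
import Mathlib


open Polynomial

/-- The polynomial `(-z² + z + λ)^k - ε`, for real `λ ≥ 0`, `k ≥ 1` and `ε = ±i`,
has degree `2k` and exactly `2k` distinct complex roots (it is squarefree). -/
theorem stmt13 (lam : ℝ) (hlam : 0 ≤ lam) (k : ℕ) (hk : 1 ≤ k) (ε : ℂ)
    (hε : ε = Complex.I ∨ ε = -Complex.I) :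
    ((-X ^ 2 + X + C (lam : ℂ)) ^ k - C ε).natDegree = 2 * k ∧
    ((-X ^ 2 + X + C (lam : ℂ)) ^ k - C ε).roots.toFinset.card = 2 * k ∧
    Squarefree ((-X ^ 2 + X + C (lam : ℂ)) ^ k - C ε) := by
  set q : ℂ[X] := -X ^ 2 + X + C (lam : ℂ) with hq
  set p : ℂ[X] := q ^ k - C ε with hp
  have hqdeg : q.natDegree = 2 := by rw [hq]; compute_degree!
  have hdeg : p.natDegree = 2 * k := by
    rw [hp, natDegree_sub_C, natDegree_pow, hqdeg, Nat.mul_comm]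
  have hεne : ε ≠ 0 := by rcases hε with h | h <;> simp [h, Complex.I_ne_zero]
  have hεim : ε.im = 1 ∨ ε.im = -1 := by rcases hε with h | h <;> simp [h]
  have hsep : p.Separable := by
    rw [Polynomial.Separable, Polynomial.isCoprime_iff_aeval_ne_zero_of_isAlgClosed (k := ℂ) ℂ]
    intro a
    by_contra h
    push_neg at h
    obtain ⟨h1, h2⟩ := h
    simp only [Polynomial.aeval_def, eval₂_eq_eval_map, Algebra.algebraMap_self,
      Polynomial.map_id] at h1 h2
    rw [hp, derivative_sub, derivative_C, sub_zero, derivative_pow] at h2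
    have hq' : derivative q = C (-2 : ℂ) * X + 1 := by
      rw [hq]; simp [derivative_pow]
    rw [hq'] at h2
    simp only [eval_mul, eval_add, eval_pow, eval_C, eval_X, eval_one, eval_natCast] at h2
    have hkne : (k : ℂ) ≠ 0 := Nat.cast_ne_zero.mpr (by omega)
    rcases mul_eq_zero.mp h2 with h3 | h3
    · rcases mul_eq_zero.mp h3 with h4 | h4
      · exact hkne h4
      · -- eval a q ^ (k-1) = 0 → eval a q = 0
        have hqa : eval a q = 0 := (pow_eq_zero_iff'.mp h4).1
        rw [hp] at h1
        simp only [eval_sub, eval_pow, eval_C, hqa, zero_pow (by omega : k ≠ 0)] at h1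
        exact hεne (by linear_combination -h1)
    · -- -2a + 1 = 0, a = 1/2
      have ha : a = 1/2 := by
        have : (-2 : ℂ) * a + 1 = 0 := h3
        field_simp at this ⊢
        linear_combination -this
      have hqa : eval a q = ((1/4 + lam : ℝ) : ℂ) := by
        rw [hq, ha]; push_cast; simp [eval_pow]; ring
      rw [hp] at h1
      simp only [eval_sub, eval_pow, eval_C, hqa] at h1
      have him : (((1/4 + lam : ℝ) : ℂ) ^ k).im = ε.im := by
        rw [sub_eq_zero] at h1; rw [h1]
      rw [← Complex.ofReal_pow, Complex.ofReal_im] at him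
      rcases hεim with h | h <;> rw [h] at him <;> norm_num at him
  have hpne : p ≠ 0 := fun h0 => by simp [h0] at hdeg; omega
  have hsplit : p.roots.card = p.natDegree :=
    (Polynomial.splits_iff_card_roots).mp (IsAlgClosed.splits p)
  refine ⟨hdeg, ?_, hsep.squarefree⟩
  rw [Multiset.toFinset_card_of_nodup (Polynomial.nodup_roots hsep), hsplit, hdeg]
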